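/- Let 0 < ε < 1/2, let m ≥ 1 be a natural number, and set b_k = (6/ε)^(k−1) for k ≥ 1. Let x : ℤ → ℝ satisfy x_j = 0 for all j ≤ 0 and, for every k with 1 ≤ k ≤ m, the inequality ε·|x_k| ≤ b_k − 2·x_{k−1} + 7·x_{k−2} − 7·x_{k−3} + 2·x_{k−4}. Then for every k with 1 ≤ k ≤ m one has 2·|x_{k−1}| + 7·|x_{k−2}| + 7·|x_{k−3}| + 2·|x_{k−4}| < b_k; in particular the right-hand side b_k − 2·x_{k−1} + 7·x_{k−2} − 7·x_{k−3} + 2·x_{k−4} is strictly positive. -/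

import Mathlib

private lemma main_est (ε q : ℝ) (hq : 12 < q) (hεq : ε * q = 6)
    (B e1 e2 e3 e4 : ℝ) (he4 : 0 < e4)
    (hB : B = q * e1) (h1 : e1 = q * e2) (h2 : e2 = q * e3) (h3 : e3 = q * e4)
    (v1 v2 v3 v4 : ℝ)
    (hb1 : ε * |v1| ≤ 2 * e1) (hb2 : ε * |v2| ≤ 2 * e2)
    (hb3 : ε * |v3| ≤ 2 * e3) (hb4 : ε * |v4| ≤ 2 * e4) :
    2 * |v1| + 7 * |v2| + 7 * |v3| + 2 * |v4| < B := by
  have hq0 : 0 < q := by linarith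
  have he3 : 0 < e3 := by nlinarith
  have he2 : 0 < e2 := by nlinarith
  have he1 : 0 < e1 := by nlinarith
  have t1 := mul_le_mul_of_nonneg_left hb1 hq0.le
  have t2 := mul_le_mul_of_nonneg_left hb2 hq0.le
  have t3 := mul_le_mul_of_nonneg_left hb3 hq0.le
  have t4 := mul_le_mul_of_nonneg_left hb4 hq0.le
  have s1 : 6 * |v1| ≤ 2 * B := by nlinarith [abs_nonneg v1]
  have s2 : 6 * |v2| ≤ 2 * e1 := by nlinarith [abs_nonneg v2]
  have s3 : 6 * |v3| ≤ 2 * e2 := by nlinarith [abs_nonneg v3]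
  have s4 : 6 * |v4| ≤ 2 * e3 := by nlinarith [abs_nonneg v4]
  have u1 : 12 * e1 < B := by nlinarith
  have u2 : 12 * e2 < e1 := by nlinarith
  have u3 : 12 * e3 < e2 := by nlinarith
  linarith


/-- For the deformed cube `D_m^ε` with `0 < ε < 1/2` and `b_k = (6/ε)^(k-1)`:
under the defining inequalities, for every `1 ≤ k ≤ m` one has
`2|x_{k-1}| + 7|x_{k-2}| + 7|x_{k-3}| + 2|x_{k-4}| < b_k`; in particular the
right-hand side `b_k - 2x_{k-1} + 7x_{k-2} - 7x_{k-3} + 2x_{k-4}` is strictly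
positive. -/
theorem stmt_12 (ε : ℝ) (hε0 : 0 < ε) (hε : ε < 1 / 2) (m : ℕ) (hm : 1 ≤ m)
    (x : ℤ → ℝ) (hx0 : ∀ j : ℤ, j ≤ 0 → x j = 0)
    (hineq : ∀ k : ℤ, 1 ≤ k → k ≤ (m : ℤ) →
      ε * |x k| ≤ (6 / ε) ^ (k - 1) - 2 * x (k - 1) + 7 * x (k - 2)
        - 7 * x (k - 3) + 2 * x (k - 4)) :
    ∀ k : ℤ, 1 ≤ k → k ≤ (m : ℤ) →
      2 * |x (k - 1)| + 7 * |x (k - 2)| + 7 * |x (k - 3)| + 2 * |x (k - 4)|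
          < (6 / ε) ^ (k - 1) ∧
        0 < (6 / ε) ^ (k - 1) - 2 * x (k - 1) + 7 * x (k - 2)
          - 7 * x (k - 3) + 2 * x (k - 4) := by
  set q : ℝ := 6 / ε with hqdef
  have hq : 12 < q := by
    rw [hqdef, lt_div_iff₀ hε0]; linarith
  have hq0 : 0 < q := by linarith
  have hqne : q ≠ 0 := ne_of_gt hq0
  have hεq : ε * q = 6 := by
    rw [hqdef]; field_simp [hε0.ne']
  have hzpow : ∀ j : ℤ, q ^ j = q * q ^ (j - 1) := by
    intro j
    rw [show j = (j - 1) + 1 by ring, zpow_add_one₀ hqne]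
    ring_nf
  have hpos : ∀ j : ℤ, 0 < q ^ j := fun j => zpow_pos hq0 j
  -- main estimate applied at k
  have est : ∀ k : ℤ,
      (∀ j : ℤ, 1 ≤ j → j ≤ 4 → ε * |x (k - j)| ≤ 2 * q ^ (k - j - 1)) →
      2 * |x (k - 1)| + 7 * |x (k - 2)| + 7 * |x (k - 3)| + 2 * |x (k - 4)|
        < q ^ (k - 1) := by
    intro k hb
    refine main_est ε q hq hεq (q ^ (k-1)) (q ^ (k-2)) (q ^ (k-3)) (q ^ (k-4)) (q ^ (k-5))
      (hpos _) ?_ ?_ ?_ ?_ (x (k-1)) (x (k-2)) (x (k-3)) (x (k-4)) ?_ ?_ ?_ ?_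
    · rw [show (k-1 : ℤ) = (k-2) + 1 by ring, zpow_add_one₀ hqne]; ring
    · rw [show (k-2 : ℤ) = (k-3) + 1 by ring, zpow_add_one₀ hqne]; ring
    · rw [show (k-3 : ℤ) = (k-4) + 1 by ring, zpow_add_one₀ hqne]; ring
    · rw [show (k-4 : ℤ) = (k-5) + 1 by ring, zpow_add_one₀ hqne]; ring
    · have := hb 1 (by norm_num) (by norm_num); convert this using 3 <;> ring
    · have := hb 2 (by norm_num) (by norm_num); convert this using 3 <;> ring
    · have := hb 3 (by norm_num) (by norm_num); convert this using 3 <;> ring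
    · have := hb 4 (by norm_num) (by norm_num); convert this using 3 <;> ring
  have key : ∀ n : ℕ, ∀ k : ℤ, k ≤ (n : ℤ) → k ≤ (m : ℤ) → ε * |x k| ≤ 2 * q ^ (k - 1) := by
    intro n
    induction n with
    | zero =>
      intro k hk _
      rw [hx0 k (by exact_mod_cast hk)]
      simp only [abs_zero, mul_zero]
      positivity
    | succ n ih =>
      intro k hk hkm
      by_cases h : k ≤ (n : ℤ)
      · exact ih k h hkm
      · have hk1 : 1 ≤ k := by
          push_cast at hk ⊢; omega
        have hb : ∀ j : ℤ, 1 ≤ j → j ≤ 4 → ε * |x (k - j)| ≤ 2 * q ^ (k - j - 1) := by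
          intro j hj1 hj4
          exact ih (k - j) (by push_cast at hk ⊢; omega) (by omega)
        have hsum := est k hb
        have H := hineq k hk1 hkm
        have a1 := le_abs_self (x (k - 1)); have a1' := neg_abs_le (x (k - 1))
        have a2 := le_abs_self (x (k - 2)); have a2' := neg_abs_le (x (k - 2))
        have a3 := le_abs_self (x (k - 3)); have a3' := neg_abs_le (x (k - 3))
        have a4 := le_abs_self (x (k - 4)); have a4' := neg_abs_le (x (k - 4))
        linarith
  intro k hk1 hkm
  have hb : ∀ j : ℤ, 1 ≤ j → j ≤ 4 → ε * |x (k - j)| ≤ 2 * q ^ (k - j - 1) := by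
    intro j hj1 hj4
    exact key m (k - j) (by omega) (by omega)
  have hsum := est k hb
  have H := hineq k hk1 hkm
  refine ⟨hsum, ?_⟩
  have a1 := le_abs_self (x (k - 1)); have a1' := neg_abs_le (x (k - 1))
  have a2 := le_abs_self (x (k - 2)); have a2' := neg_abs_le (x (k - 2))
  have a3 := le_abs_self (x (k - 3)); have a3' := neg_abs_le (x (k - 3))
  have a4 := le_abs_self (x (k - 4)); have a4' := neg_abs_le (x (k - 4))
  linarith
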